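/- Let 𝓘 measure effect a and 𝓙 measure effect b, and let ρ be a state with tr(ρa) ≠ 0 and tr(ρb) ≠ 0. Bayes' quantum second rule P_ρ(b|a) = (P_ρ(b)/P_ρ(a))·P_ρ(a|b) holds for every such state ρ if and only if 𝓘*(b) = 𝓙*(a). -/

import Mathlib

open scoped ComplexOrder

open Matrix BigOperators

/-- An effect on a finite-dimensional Hilbert space: `0 ≤ a ≤ I`. -/
def IsEffect {n : ℕ} (a : Matrix (Fin n) (Fin n) ℂ) : Prop :=
  a.PosSemidef ∧ (1 - a).PosSemidef

/-- A state: positive operator of trace one. -/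
def IsState {n : ℕ} (ρ : Matrix (Fin n) (Fin n) ℂ) : Prop :=
  ρ.PosSemidef ∧ ρ.trace = 1

/-- The dual of the operation with Kraus operators `K i`. -/
noncomputable def KrausDual {n m : ℕ} (K : Fin m → Matrix (Fin n) (Fin n) ℂ)
    (A : Matrix (Fin n) (Fin n) ℂ) : Matrix (Fin n) (Fin n) ℂ :=
  ∑ i, (K i)ᴴ * A * K i

open scoped MatrixOrder Matrix.Norms.L2Operator in
lemma psd_eq_conjTranspose_mul_self {n : ℕ} {A : Matrix (Fin n) (Fin n) ℂ} (hA : A.PosSemidef) :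
    ∃ B : Matrix (Fin n) (Fin n) ℂ, A = Bᴴ * B :=
  CStarAlgebra.nonneg_iff_eq_star_mul_self.mp hA.nonneg

lemma psd_trace_nonneg {n : ℕ} {A : Matrix (Fin n) (Fin n) ℂ} (hA : A.PosSemidef) :
    0 ≤ A.trace := by
  obtain ⟨B, rfl⟩ := psd_eq_conjTranspose_mul_self hA
  rw [Matrix.trace]
  refine Finset.sum_nonneg fun i _ => ?_
  simp only [Matrix.diag_apply, Matrix.mul_apply, Matrix.conjTranspose_apply]
  exact Finset.sum_nonneg fun j _ => star_mul_self_nonneg _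

lemma psd_trace_eq_zero {n : ℕ} {A : Matrix (Fin n) (Fin n) ℂ} (hA : A.PosSemidef)
    (h : A.trace = 0) : A = 0 := by
  obtain ⟨B, rfl⟩ := psd_eq_conjTranspose_mul_self hA
  suffices hB : B = 0 by simp [hB]
  have h' : ∑ i, ∑ j, star (B j i) * B j i = 0 := by
    rw [← h, Matrix.trace]
    simp [Matrix.mul_apply, Matrix.conjTranspose_apply]
  ext i j
  have h2 : ∀ i ∈ Finset.univ, (0:ℂ) ≤ ∑ j, star (B j i) * B j i :=
    fun i _ => Finset.sum_nonneg fun j _ => star_mul_self_nonneg _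
  have h3 := (Finset.sum_eq_zero_iff_of_nonneg h2).mp h' j (Finset.mem_univ j)
  have h4 := (Finset.sum_eq_zero_iff_of_nonneg
    (fun l _ => star_mul_self_nonneg (B l j))).mp h3 i (Finset.mem_univ i)
  simpa [star_eq_zero] using mul_eq_zero.mp h4

lemma psd_smul {n : ℕ} {A : Matrix (Fin n) (Fin n) ℂ} (hA : A.PosSemidef) {c : ℂ}
    (hc : 0 ≤ c) : (c • A).PosSemidef := by
  have hcs : star c = c := by
    rw [Complex.nonneg_iff] at hc
    exact Complex.ext rfl (by simp [← hc.2])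
  rw [Matrix.posSemidef_iff_dotProduct_mulVec]
  constructor
  · unfold Matrix.IsHermitian
    rw [Matrix.conjTranspose_smul, hA.1, hcs]
  · intro x
    rw [Matrix.smul_mulVec, dotProduct_smul, smul_eq_mul]
    exact mul_nonneg hc (hA.dotProduct_mulVec_nonneg x)

lemma psd_sum {n N : ℕ} {f : Fin N → Matrix (Fin n) (Fin n) ℂ}
    (hf : ∀ i, (f i).PosSemidef) : (∑ i, f i).PosSemidef := by
  classical
  induction (Finset.univ : Finset (Fin N)) using Finset.induction with
  | empty => simpa using Matrix.PosSemidef.zero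
  | insert _ _ h ih => rw [Finset.sum_insert h]; exact (hf _).add ih

lemma krausDual_psd {n m : ℕ} (K : Fin m → Matrix (Fin n) (Fin n) ℂ)
    {A : Matrix (Fin n) (Fin n) ℂ} (hA : A.PosSemidef) : (KrausDual K A).PosSemidef :=
  psd_sum fun i => hA.conjTranspose_mul_mul_same (K i)

lemma krausDual_sub {n m : ℕ} (K : Fin m → Matrix (Fin n) (Fin n) ℂ)
    (A B : Matrix (Fin n) (Fin n) ℂ) :
    KrausDual K (A - B) = KrausDual K A - KrausDual K B := by
  unfold KrausDual
  rw [← Finset.sum_sub_distrib]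
  congr 1; ext i
  noncomm_ring

lemma trace_mul_psd_nonneg {n : ℕ} {ρ A : Matrix (Fin n) (Fin n) ℂ}
    (hρ : ρ.PosSemidef) (hA : A.PosSemidef) : 0 ≤ (ρ * A).trace := by
  obtain ⟨C, rfl⟩ := psd_eq_conjTranspose_mul_self hρ
  rw [Matrix.mul_assoc, Matrix.trace_mul_comm]
  exact psd_trace_nonneg (hA.mul_mul_conjTranspose_same C)

lemma vecMulVec_psd {n : ℕ} (v : Fin n → ℂ) : (vecMulVec v (star v)).PosSemidef := by
  have h : vecMulVec v (star v) = replicateCol (Fin 1) v * (replicateCol (Fin 1) v)ᴴ := by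
    ext i j
    simp [Matrix.vecMulVec_apply, Matrix.mul_apply, Matrix.replicateCol_apply]
  rw [h]
  exact Matrix.posSemidef_self_mul_conjTranspose _

lemma trace_vecMulVec_mul {n : ℕ} (v : Fin n → ℂ) (D : Matrix (Fin n) (Fin n) ℂ) :
    (vecMulVec v (star v) * D).trace = star v ⬝ᵥ D *ᵥ v := by
  simp only [Matrix.trace, Matrix.diag_apply, Matrix.mul_apply, Matrix.vecMulVec_apply,
    dotProduct, Matrix.mulVec, Pi.star_apply, Finset.mul_sum]
  rw [Finset.sum_comm]
  congr 1; ext j; congr 1; ext i; ring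

lemma trace_vecMulVec {n : ℕ} (v : Fin n → ℂ) :
    (vecMulVec v (star v)).trace = star v ⬝ᵥ v := by
  simp [Matrix.trace, Matrix.vecMulVec_apply, dotProduct, mul_comm]

lemma inv_nonneg_c {c : ℂ} (hc : 0 ≤ c) : 0 ≤ c⁻¹ := by
  rw [Complex.nonneg_iff] at hc ⊢
  constructor
  · rw [Complex.inv_re]
    exact div_nonneg hc.1 (Complex.normSq_nonneg _)
  · rw [Complex.inv_im, ← hc.2]
    simp

lemma eq_of_trace_state {n : ℕ} {X Y : Matrix (Fin n) (Fin n) ℂ}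
    (hX : X.PosSemidef) (hY : Y.PosSemidef)
    (h : ∀ ρ, IsState ρ → (ρ * X).trace = (ρ * Y).trace) : X = Y := by
  have q : ∀ v : Fin n → ℂ, star v ⬝ᵥ (X - Y) *ᵥ v = 0 := by
    intro v
    by_cases hv : v = 0
    · simp [hv]
    · set c := star v ⬝ᵥ v with hcdef
      have hc0 : c ≠ 0 := fun hc => hv (dotProduct_star_self_eq_zero.mp hc)
      have hcnn : 0 ≤ c := Finset.sum_nonneg fun i _ => star_mul_self_nonneg _
      have hst : IsState (c⁻¹ • vecMulVec v (star v)) := by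
        refine ⟨psd_smul (vecMulVec_psd v) (inv_nonneg_c hcnn), ?_⟩
        rw [Matrix.trace_smul, _root_.trace_vecMulVec, smul_eq_mul, inv_mul_cancel₀ hc0]
      have h2 := h _ hst
      rw [Matrix.smul_mul, Matrix.smul_mul, Matrix.trace_smul, Matrix.trace_smul,
        smul_eq_mul, smul_eq_mul] at h2
      have h3 := mul_left_cancel₀ (inv_ne_zero hc0) h2
      rw [Matrix.sub_mulVec, dotProduct_sub, ← trace_vecMulVec_mul,
        ← trace_vecMulVec_mul, h3, sub_self]
  have hD : (X - Y).PosSemidef := Matrix.posSemidef_iff_dotProduct_mulVec.mpr ⟨hX.1.sub hY.1, fun x => le_of_eq (q x).symm⟩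
  have hdiag : ∀ i, (X - Y) i i = 0 := by
    intro i
    have := q (Pi.single i 1)
    simpa [Matrix.mulVec_single, dotProduct, Pi.single_apply] using this
  have htr : (X - Y).trace = 0 := by
    rw [Matrix.trace]
    exact Finset.sum_eq_zero fun i _ => hdiag i
  exact sub_eq_zero.mp (psd_trace_eq_zero hD htr)

/-- if the operation with Kraus operators `K` measures `a` and the one
with Kraus operators `L` measures `b`, then Bayes' quantum second rule
`P_ρ(b|a) = (P_ρ(b)/P_ρ(a))·P_ρ(a|b)` holds for every state `ρ` with
`tr(ρa) ≠ 0` and `tr(ρb) ≠ 0` if and only if `𝓘*(b) = 𝓙*(a)`. -/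
theorem bayes_second_rule_iff {n m k : ℕ}
    (K : Fin m → Matrix (Fin n) (Fin n) ℂ)
    (L : Fin k → Matrix (Fin n) (Fin n) ℂ)
    (hK : (1 - ∑ i, (K i)ᴴ * K i).PosSemidef)
    (hL : (1 - ∑ i, (L i)ᴴ * L i).PosSemidef)
    (a b : Matrix (Fin n) (Fin n) ℂ) (ha : IsEffect a) (hb : IsEffect b)
    (hmeasI : KrausDual K 1 = a) (hmeasJ : KrausDual L 1 = b) :
    (∀ ρ : Matrix (Fin n) (Fin n) ℂ, IsState ρ →
        (ρ * a).trace ≠ 0 → (ρ * b).trace ≠ 0 →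
        (ρ * KrausDual K b).trace / (ρ * a).trace =
          ((ρ * b).trace / (ρ * a).trace) *
            ((ρ * KrausDual L a).trace / (ρ * b).trace))
      ↔ KrausDual K b = KrausDual L a := by
  set X := KrausDual K b with hXdef
  set Y := KrausDual L a with hYdef
  have hXpsd : X.PosSemidef := krausDual_psd K hb.1
  have hYpsd : Y.PosSemidef := krausDual_psd L ha.1
  constructor
  · intro hyp
    have haX : (a - X).PosSemidef := by
      have h := krausDual_psd K hb.2
      rwa [krausDual_sub, hmeasI] at h
    have hbY : (b - Y).PosSemidef := by
      have h := krausDual_psd L ha.2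
      rwa [krausDual_sub, hmeasJ] at h
    rcases Nat.eq_zero_or_pos n with hn | hn
    · subst hn; ext i j; exact i.elim0
    by_cases ha0 : a = 0
    · have hY0 : Y = 0 := by simp [hYdef, KrausDual, ha0]
      have hX0 : X = 0 := by
        apply psd_trace_eq_zero hXpsd
        have h2 := psd_trace_nonneg haX
        rw [ha0, zero_sub, Matrix.trace_neg] at h2
        exact le_antisymm (neg_nonneg.mp h2) (psd_trace_nonneg hXpsd)
      rw [hX0, hY0]
    by_cases hb0 : b = 0
    · have hX0 : X = 0 := by simp [hXdef, KrausDual, hb0]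
      have hY0 : Y = 0 := by
        apply psd_trace_eq_zero hYpsd
        have h2 := psd_trace_nonneg hbY
        rw [hb0, zero_sub, Matrix.trace_neg] at h2
        exact le_antisymm (neg_nonneg.mp h2) (psd_trace_nonneg hYpsd)
      rw [hX0, hY0]
    -- main case
    have hexists : ∃ ρ0 : Matrix (Fin n) (Fin n) ℂ, IsState ρ0 ∧
        0 < (ρ0 * a).trace ∧ 0 < (ρ0 * b).trace := by
      have hnne : (n : ℂ) ≠ 0 := Nat.cast_ne_zero.mpr hn.ne'
      have hninv : (0:ℂ) < ((n : ℂ))⁻¹ := by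
        rw [show ((n:ℂ))⁻¹ = (((n:ℝ)⁻¹ : ℝ) : ℂ) by push_cast; ring]
        rw [Complex.zero_lt_real]
        positivity
      have hta : 0 < a.trace :=
        lt_of_le_of_ne (psd_trace_nonneg ha.1) (fun h => ha0 (psd_trace_eq_zero ha.1 h.symm))
      have htb : 0 < b.trace :=
        lt_of_le_of_ne (psd_trace_nonneg hb.1) (fun h => hb0 (psd_trace_eq_zero hb.1 h.symm))
      refine ⟨((n : ℂ))⁻¹ • 1, ⟨psd_smul Matrix.PosSemidef.one hninv.le, ?_⟩, ?_, ?_⟩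
      · rw [Matrix.trace_smul, Matrix.trace_one, smul_eq_mul]
        simp [inv_mul_cancel₀ hnne]
      · rw [Matrix.smul_mul, Matrix.trace_smul, smul_eq_mul, Matrix.one_mul]
        exact mul_pos hninv hta
      · rw [Matrix.smul_mul, Matrix.trace_smul, smul_eq_mul, Matrix.one_mul]
        exact mul_pos hninv htb
    obtain ⟨ρ0, hρ0, hpa0, hpb0⟩ := hexists
    apply eq_of_trace_state hXpsd hYpsd
    intro ρ hρ
    have claim : ∀ t : ℂ, 0 < t → 0 < 1 - t →
        (1 - t) * (ρ0 * X).trace + t * (ρ * X).trace =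
          (1 - t) * (ρ0 * Y).trace + t * (ρ * Y).trace := by
      intro t ht ht1
      set ρt : Matrix (Fin n) (Fin n) ℂ := (1 - t) • ρ0 + t • ρ with hρtdef
      have htrace : ∀ M : Matrix (Fin n) (Fin n) ℂ,
          (ρt * M).trace = (1 - t) * (ρ0 * M).trace + t * (ρ * M).trace := by
        intro M
        rw [hρtdef, Matrix.add_mul, Matrix.smul_mul, Matrix.smul_mul, Matrix.trace_add,
          Matrix.trace_smul, Matrix.trace_smul, smul_eq_mul, smul_eq_mul]
      have hρt : IsState ρt := by
        constructor
        · exact (psd_smul hρ0.1 ht1.le).add (psd_smul hρ.1 ht.le)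
        · rw [hρtdef, Matrix.trace_add, Matrix.trace_smul, Matrix.trace_smul,
            hρ0.2, hρ.2, smul_eq_mul, smul_eq_mul]
          ring
      have hpa : 0 < (ρt * a).trace := by
        rw [htrace]
        exact add_pos_of_pos_of_nonneg (mul_pos ht1 hpa0)
          (mul_nonneg ht.le (trace_mul_psd_nonneg hρ.1 ha.1))
      have hpb : 0 < (ρt * b).trace := by
        rw [htrace]
        exact add_pos_of_pos_of_nonneg (mul_pos ht1 hpb0)
          (mul_nonneg ht.le (trace_mul_psd_nonneg hρ.1 hb.1))
      have h := hyp ρt hρt hpa.ne' hpb.ne'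
      have h2 : (ρt * X).trace = (ρt * Y).trace := by
        field_simp at h
        have h' : (ρt * X).trace * ((ρt * a).trace * (ρt * b).trace) =
            (ρt * Y).trace * ((ρt * a).trace * (ρt * b).trace) := by linear_combination h * ((ρt * a).trace * (ρt * b).trace)
        exact mul_right_cancel₀ (mul_ne_zero hpa.ne' hpb.ne') h'
      rw [htrace, htrace] at h2
      exact h2
    have hhalf : (0:ℂ) < 2⁻¹ := by
      rw [Complex.pos_iff]; norm_num
    have hhalf1 : (0:ℂ) < 1 - 2⁻¹ := by
      rw [Complex.pos_iff]; norm_num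
    have hthird : (0:ℂ) < 3⁻¹ := by
      rw [Complex.pos_iff]; norm_num
    have hthird1 : (0:ℂ) < 1 - 3⁻¹ := by
      rw [Complex.pos_iff]; norm_num
    have e1 := claim 2⁻¹ hhalf hhalf1
    have e2 := claim 3⁻¹ hthird hthird1
    linear_combination (4:ℂ) * e1 - 3 * e2
  · intro heq ρ hρ hta htb
    rw [heq]
    field_simp
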